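/- Let m = 4t, t ≥ 3, n = 2t. Define an action of the unit group (Z/m)^× on the set J = {(i,k) : 1 ≤ i ≤ n−1, 1 ≤ k ≤ m−1, ω^{ik} = −1} by ℓ·(i,k) = (ℓi mod m, ℓ⁻¹k mod m) if 1 ≤ ℓi mod m < n, and ℓ·(i,k) = (m − (ℓi mod m), ℓ⁻¹k mod m) otherwise. Then this is a well-defined group action of (Z/m)^× on J (in particular ℓ·(i,k) ∈ J for all ℓ coprime to m and (i,k) ∈ J). -/
import Mathlib


/-- The folding operation `ℓ·(i,k)` defines a well-defined action of the unit
group `(ℤ/m)ˣ` on `J = {(i,k) : 1 ≤ i ≤ n-1, 1 ≤ k ≤ m-1, ω^(ik) = -1}`. -/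
theorem stmt19 (K : Type*) [Field K] [CharZero K] (t m n : ℕ) (ht : 3 ≤ t)
    (hm : m = 4 * t) (hn : n = 2 * t) (ω : K) (hω : IsPrimitiveRoot ω m)
    (J : Set (ℕ × ℕ))
    (hJ : J = {p : ℕ × ℕ | 1 ≤ p.1 ∧ p.1 ≤ n - 1 ∧ 1 ≤ p.2 ∧ p.2 ≤ m - 1 ∧
      ω ^ (p.1 * p.2) = -1})
    (act : (ZMod m)ˣ → ℕ × ℕ → ℕ × ℕ)
    (hact : ∀ (ℓ : (ZMod m)ˣ) (p : ℕ × ℕ),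
      act ℓ p =
        if ((ℓ : ZMod m) * (p.1 : ZMod m)).val < n then
          (((ℓ : ZMod m) * (p.1 : ZMod m)).val,
            (((ℓ⁻¹ : (ZMod m)ˣ) : ZMod m) * (p.2 : ZMod m)).val)
        else
          (m - ((ℓ : ZMod m) * (p.1 : ZMod m)).val,
            (((ℓ⁻¹ : (ZMod m)ˣ) : ZMod m) * (p.2 : ZMod m)).val)) :
    (∀ (ℓ : (ZMod m)ˣ) (p : ℕ × ℕ), p ∈ J → act ℓ p ∈ J) ∧
    (∀ p ∈ J, act 1 p = p) ∧
    (∀ (ℓ₁ ℓ₂ : (ZMod m)ˣ) (p : ℕ × ℕ), p ∈ J →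
      act (ℓ₁ * ℓ₂) p = act ℓ₁ (act ℓ₂ p)) := by
  subst hm hn hJ
  haveI : NeZero (4 * t) := ⟨by omega⟩
  -- basic cast facts
  have hcast : ∀ a : ZMod (4*t), ((a.val : ℕ) : ZMod (4*t)) = a := fun a => by
    simp [ZMod.natCast_val, ZMod.cast_id]
  have hvlt : ∀ a : ZMod (4*t), a.val < 4*t := fun a => ZMod.val_lt a
  -- ω ^ (4t) = 1
  have h4t : ω ^ (4*t) = 1 := hω.pow_eq_one
  have hper : ∀ x : ℕ, ω ^ x = ω ^ (x % (4*t)) := by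
    intro x
    conv_lhs => rw [← Nat.div_add_mod x (4*t)]
    rw [pow_add, pow_mul, h4t, one_pow, one_mul]
  have h2t : ω ^ (2*t) = -1 := by
    have hsq : (ω ^ (2*t))^2 = 1 := by
      rw [← pow_mul]
      rw [show 2*t*2 = 4*t by ring]
      exact h4t
    rcases sq_eq_one_iff.mp hsq with h | h
    · exact absurd h (hω.pow_ne_one_of_pos_of_lt (by omega) (by omega))
    · exact h
  -- characterization of ω^x = -1
  have hneg : ∀ x : ℕ, ω ^ x = -1 ↔ (x : ZMod (4*t)) = ((2*t : ℕ) : ZMod (4*t)) := by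
    intro x
    constructor
    · intro h
      rw [hper] at h
      set r := x % (4*t) with hr
      have hrlt : r < 4*t := Nat.mod_lt _ (by omega)
      have hsq : ω ^ (2*r) = 1 := by
        rw [two_mul, pow_add, h, neg_mul_neg, one_mul]
      have hdvd : 4*t ∣ 2*r := (hω.pow_eq_one_iff_dvd _).mp hsq
      have : r = 0 ∨ r = 2*t := by
        rcases hdvd with ⟨c, hc⟩
        have hcle : c ≤ 1 := by nlinarith
        interval_cases c <;> omega
      rcases this with h0 | h0
      · rw [h0, pow_zero] at h
        exact absurd h (by norm_num)
      · rw [ZMod.natCast_eq_natCast_iff]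
        show x % (4*t) = 2*t % (4*t)
        have h2tm : 2*t % (4*t) = 2*t := Nat.mod_eq_of_lt (by omega)
        omega
    · intro h
      rw [ZMod.natCast_eq_natCast_iff] at h
      unfold Nat.ModEq at h
      rw [hper, h, Nat.mod_eq_of_lt (by omega), h2t]
  -- 2t is its own negative in ZMod (4t)
  have hhalf : -(((2*t : ℕ)) : ZMod (4*t)) = ((2*t : ℕ) : ZMod (4*t)) := by
    rw [neg_eq_iff_add_eq_zero, ← Nat.cast_add, show 2*t+2*t = 4*t by ring,
      ZMod.natCast_self]
  -- nonzero values
  have hvne : ∀ (u : (ZMod (4*t))ˣ) (x : ℕ), 1 ≤ x → x ≤ 4*t - 1 →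
      ((u : ZMod (4*t)) * (x : ZMod (4*t))).val ≠ 0 := by
    intro u x h1 h2 h
    rw [ZMod.val_eq_zero, Units.mul_right_eq_zero u] at h
    have := (ZMod.natCast_eq_zero_iff x (4*t)).mp h
    have := Nat.le_of_dvd (by omega) this
    omega
  -- values avoid 2t for first coordinates
  have hne2t : ∀ (u : (ZMod (4*t))ˣ) (x : ℕ), 1 ≤ x → x ≤ 2*t - 1 →
      ((u : ZMod (4*t)) * (x : ZMod (4*t))).val ≠ 2*t := by
    intro u x h1 h2 h
    have h' : (u : ZMod (4*t)) * (x : ZMod (4*t)) = ((2*t : ℕ) : ZMod (4*t)) := by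
      rw [← hcast ((u : ZMod (4*t)) * (x : ZMod (4*t))), h]
    have h2' : (u : ZMod (4*t)) * ((2*x : ℕ) : ZMod (4*t)) = 0 := by
      push_cast
      calc (u : ZMod (4*t)) * (2 * (x:ZMod (4*t)))
          = 2 * ((u : ZMod (4*t)) * (x:ZMod (4*t))) := by ring
        _ = 2 * ((2*t : ℕ) : ZMod (4*t)) := by rw [h']
        _ = ((4*t : ℕ) : ZMod (4*t)) := by push_cast; ring
        _ = 0 := ZMod.natCast_self _
    rw [Units.mul_right_eq_zero u] at h2'
    have := (ZMod.natCast_eq_zero_iff (2*x) (4*t)).mp h2'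
    have := Nat.le_of_dvd (by omega) this
    omega
  -- membership
  have mem : ∀ (ℓ : (ZMod (4*t))ˣ) (p : ℕ × ℕ),
      p ∈ {p : ℕ × ℕ | 1 ≤ p.1 ∧ p.1 ≤ 2*t - 1 ∧ 1 ≤ p.2 ∧ p.2 ≤ 4*t - 1 ∧
        ω ^ (p.1 * p.2) = -1} →
      act ℓ p ∈ {p : ℕ × ℕ | 1 ≤ p.1 ∧ p.1 ≤ 2*t - 1 ∧ 1 ≤ p.2 ∧ p.2 ≤ 4*t - 1 ∧
        ω ^ (p.1 * p.2) = -1} := by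
    rintro ℓ ⟨i, k⟩ ⟨hi1, hi2, hk1, hk2, hik⟩
    simp only [Set.mem_setOf_eq] at *
    rw [hact]
    set A := ((ℓ : ZMod (4*t)) * (i : ZMod (4*t))).val with hA
    set B := (((ℓ⁻¹ : (ZMod (4*t))ˣ) : ZMod (4*t)) * (k : ZMod (4*t))).val with hB
    have hA0 : A ≠ 0 := hvne ℓ i hi1 (by omega)
    have hAlt : A < 4*t := hvlt _
    have hA2t : A ≠ 2*t := hne2t ℓ i hi1 hi2
    have hB0 : B ≠ 0 := hvne ℓ⁻¹ k hk1 hk2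
    have hBlt : B < 4*t := hvlt _
    have hABcast : ((A : ℕ) : ZMod (4*t)) * ((B : ℕ) : ZMod (4*t))
        = ((i*k : ℕ) : ZMod (4*t)) := by
      rw [hA, hB, hcast, hcast]
      push_cast
      calc (ℓ : ZMod (4*t)) * (i : ZMod (4*t)) *
            (((ℓ⁻¹ : (ZMod (4*t))ˣ) : ZMod (4*t)) * (k : ZMod (4*t)))
          = ((ℓ : ZMod (4*t)) * ((ℓ⁻¹ : (ZMod (4*t))ˣ) : ZMod (4*t))) *
            ((i : ZMod (4*t)) * (k : ZMod (4*t))) := by ring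
        _ = (i : ZMod (4*t)) * (k : ZMod (4*t)) := by
            rw [← Units.val_mul, mul_inv_cancel, Units.val_one, one_mul]
    have hik' : ((i*k : ℕ) : ZMod (4*t)) = ((2*t : ℕ) : ZMod (4*t)) :=
      (hneg _).mp hik
    by_cases hc : A < 2*t
    · rw [if_pos hc]
      refine ⟨by omega, by omega, by omega, by omega, ?_⟩
      rw [hneg, Nat.cast_mul, hABcast, hik']
    · rw [if_neg hc]
      refine ⟨by omega, by omega, by omega, by omega, ?_⟩
      rw [hneg]
      have hsub : (((4*t - A : ℕ)) : ZMod (4*t)) = -((A : ℕ) : ZMod (4*t)) := by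
        rw [Nat.cast_sub (by omega), ZMod.natCast_self, zero_sub]
      rw [Nat.cast_mul, hsub, neg_mul, hABcast, hik', hhalf]
  refine ⟨mem, ?_, ?_⟩
  · -- identity
    rintro ⟨i, k⟩ ⟨hi1, hi2, hk1, hk2, _⟩
    rw [hact]
    simp only [Units.val_one, one_mul, inv_one]
    rw [ZMod.val_natCast, Nat.mod_eq_of_lt (by omega : i < 4*t),
      ZMod.val_natCast, Nat.mod_eq_of_lt (by omega : k < 4*t)]
    rw [if_pos (by omega : i < 2*t)]
  · -- compatibility
    rintro ℓ₁ ℓ₂ ⟨i, k⟩ hp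
    obtain ⟨hi1, hi2, hk1, hk2, hik⟩ := hp
    simp only [Set.mem_setOf_eq] at hi1 hi2 hk1 hk2 hik
    set C := ((ℓ₂ : ZMod (4*t)) * (i : ZMod (4*t))).val with hC
    set D := (((ℓ₁*ℓ₂ : (ZMod (4*t))ˣ) : ZMod (4*t)) * (i : ZMod (4*t))).val with hD
    have hC0 : C ≠ 0 := hvne ℓ₂ i hi1 (by omega)
    have hClt : C < 4*t := hvlt _
    have hC2t : C ≠ 2*t := hne2t ℓ₂ i hi1 hi2
    have hD0 : D ≠ 0 := hvne (ℓ₁*ℓ₂) i hi1 (by omega)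
    have hDlt : D < 4*t := hvlt _
    have hD2t : D ≠ 2*t := hne2t (ℓ₁*ℓ₂) i hi1 hi2
    -- second coordinate equality
    have hsnd : (((ℓ₁⁻¹ : (ZMod (4*t))ˣ) : ZMod (4*t)) *
          (((((ℓ₂⁻¹ : (ZMod (4*t))ˣ) : ZMod (4*t)) * (k : ZMod (4*t))).val : ℕ)
            : ZMod (4*t))).val
        = ((((ℓ₁*ℓ₂)⁻¹ : (ZMod (4*t))ˣ) : ZMod (4*t)) * (k : ZMod (4*t))).val := by
      congr 1
      rw [hcast]
      rw [mul_inv_rev, Units.val_mul, mul_assoc]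
      ring_nf
    rw [hact (ℓ₁*ℓ₂), hact ℓ₂]
    by_cases hc : C < 2*t
    · rw [if_pos hc, hact ℓ₁]
      simp only
      have hfst : (ℓ₁ : ZMod (4*t)) * ((C : ℕ) : ZMod (4*t))
          = ((ℓ₁*ℓ₂ : (ZMod (4*t))ˣ) : ZMod (4*t)) * (i : ZMod (4*t)) := by
        rw [hC, hcast, Units.val_mul]; ring
      rw [hfst, ← hD, hsnd]
    · rw [if_neg hc, hact ℓ₁]
      simp only
      have hfst : (ℓ₁ : ZMod (4*t)) * (((4*t - C : ℕ)) : ZMod (4*t))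
          = -(((ℓ₁*ℓ₂ : (ZMod (4*t))ˣ) : ZMod (4*t)) * (i : ZMod (4*t))) := by
        rw [Nat.cast_sub (by omega), ZMod.natCast_self, zero_sub, hC, hcast,
          Units.val_mul]
        ring
      have hnegD : (-(((ℓ₁*ℓ₂ : (ZMod (4*t))ˣ) : ZMod (4*t)) * (i : ZMod (4*t)))).val
          = 4*t - D := by
        have : -(((ℓ₁*ℓ₂ : (ZMod (4*t))ˣ) : ZMod (4*t)) * (i : ZMod (4*t)))
            = (((4*t - D : ℕ)) : ZMod (4*t)) := by
          rw [Nat.cast_sub (by omega), ZMod.natCast_self, zero_sub, hD, hcast]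
        rw [this, ZMod.val_natCast, Nat.mod_eq_of_lt (by omega)]
      rw [hfst, hnegD, hsnd, ← hD]
      clear_value C D
      by_cases hd : D < 2*t
      · rw [if_pos hd, if_neg (show ¬(4*t - D < 2*t) by omega)]
        simp only [Prod.mk.injEq]
        exact ⟨by omega, trivial⟩
      · rw [if_neg hd, if_pos (show 4*t - D < 2*t by omega)]
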